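/- Let π : (X,G) → (Y,G) be a factor map between G-systems, n ≥ 2 and α ≥ 0. Then the set G_n^α(X,G|π) ∪ Δ_n(X) is a closed subset of X^n, where G_n^α(X,G|π) is the set of off-diagonal n-tuples (x₁,…,x_n) with relative entropy dimension D̄(x₁,…,x_n|π) ≥ α, and Δ_n(X) is the n-th diagonal of X. -/

import Mathlib

open Filter Topology Pointwise
open scoped ENNReal

/-- A Følner sequence for a group `G`. -/
def IsFolnerSeq (G : Type*) [Group G] (F : ℕ → Finset G) : Prop :=
  (∀ n, (F n).Nonempty) ∧
    ∀ (K : Finset G) (δ : ℝ), 0 < δ →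
      ∀ᶠ n in atTop,
        ((symmDiff ((K : Set G) * ((F n : Set G))) ((F n : Set G))).ncard : ℝ) <
          δ * ((F n).card : ℝ)

/-- Amenability of a (countable discrete) group via almost invariant finite sets. -/
def IsAmenableGrp (G : Type*) [Group G] : Prop :=
  ∀ K : Finset G, K.Nonempty → ∀ δ : ℝ, 0 < δ →
    ∃ F : Finset G, F.Nonempty ∧
      ((symmDiff ((K : Set G) * (F : Set G)) (F : Set G)).ncard : ℝ) < δ * (F.card : ℝ)

/-- The finite set `A ∩ S`. -/
noncomputable def interF {G : Type*} (A : Finset G) (S : Set G) : Finset G :=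
  @Finset.filter G (fun g => g ∈ S) (Classical.decPred _) A

/-- `S` belongs to `𝓘(G)` : `|S ∩ F n| → ∞`. -/
def InI {G : Type*} (F : ℕ → Finset G) (S : Set G) : Prop :=
  Tendsto (fun n => (interF (F n) S).card) atTop atTop

/-- `D̄(S, α) = limsup_n |S ∩ F n| / |F n|^α`. -/
noncomputable def DbarAt {G : Type*} (F : ℕ → Finset G) (S : Set G) (α : ℝ) : ℝ≥0∞ :=
  atTop.limsup fun n =>
    ((interF (F n) S).card : ℝ≥0∞) / ENNReal.ofReal (((F n).card : ℝ) ^ α)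

/-- `D̲(S, α) = liminf_n |S ∩ F n| / |F n|^α`. -/
noncomputable def DlowAt {G : Type*} (F : ℕ → Finset G) (S : Set G) (α : ℝ) : ℝ≥0∞ :=
  atTop.liminf fun n =>
    ((interF (F n) S).card : ℝ≥0∞) / ENNReal.ofReal (((F n).card : ℝ) ^ α)

/-- The upper dimension `D̄(S)` of a subset `S ⊆ G`. -/
noncomputable def upperDim {G : Type*} (F : ℕ → Finset G) (S : Set G) : ℝ :=
  sInf {α : ℝ | 0 ≤ α ∧ DbarAt F S α = 0}

/-- The lower dimension `D̲(S)` of a subset `S ⊆ G`. -/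
noncomputable def lowerDim {G : Type*} (F : ℕ → Finset G) (S : Set G) : ℝ :=
  sInf {α : ℝ | 0 ≤ α ∧ DlowAt F S α = 0}

/-- A finite open cover of `X`. -/
def IsOpenCover {X : Type*} [TopologicalSpace X] (𝒰 : Set (Set X)) : Prop :=
  𝒰.Finite ∧ (∀ U ∈ 𝒰, IsOpen U) ∧ ⋃₀ 𝒰 = Set.univ

/-- Minimal number of members of `𝒰` needed to cover `E`. -/
noncomputable def coverNum {X : Type*} (𝒰 : Set (Set X)) (E : Set X) : ℕ :=
  sInf {k | ∃ t : Finset (Set X), ↑t ⊆ 𝒰 ∧ t.card = k ∧ E ⊆ ⋃₀ (t : Set (Set X))}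

/-- `N(𝒰 | π) = sup_y` of the covering number of the fiber `π ⁻¹ y`. -/
noncomputable def NRel {X Y : Type*} (𝒰 : Set (Set X)) (π : X → Y) : ℕ :=
  ⨆ y : Y, coverNum 𝒰 (π ⁻¹' {y})

/-- A factor map between `G`-systems. -/
def IsFactorMap (G : Type*) {X Y : Type*} [Group G] [TopologicalSpace X] [TopologicalSpace Y]
    [MulAction G X] [MulAction G Y] (π : X → Y) : Prop :=
  Continuous π ∧ Function.Surjective π ∧ ∀ (g : G) (x : X), π (g • x) = g • π x

/-- The join `⋁_{g ∈ B} g⁻¹ 𝒰`. -/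
def dynJoin {G X : Type*} [Group G] [MulAction G X] (B : Finset G) (𝒰 : Set (Set X)) :
    Set (Set X) :=
  {W | ∃ f : G → Set X, (∀ g ∈ B, f g ∈ 𝒰) ∧ W = ⋂ g ∈ B, (fun x => g • x) ⁻¹' f g}

/-- `h̄(G, 𝒰, α | π)`. -/
noncomputable def hRelU {G X Y : Type*} [Group G] [MulAction G X]
    (F : ℕ → Finset G) (𝒰 : Set (Set X)) (π : X → Y) (α : ℝ) : ℝ≥0∞ :=
  atTop.limsup fun n =>
    ENNReal.ofReal (Real.log (NRel (dynJoin (F n) 𝒰) π)) /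
      ENNReal.ofReal (((F n).card : ℝ) ^ α)

/-- `h̲(G, 𝒰, α | π)`. -/
noncomputable def hRelL {G X Y : Type*} [Group G] [MulAction G X]
    (F : ℕ → Finset G) (𝒰 : Set (Set X)) (π : X → Y) (α : ℝ) : ℝ≥0∞ :=
  atTop.liminf fun n =>
    ENNReal.ofReal (Real.log (NRel (dynJoin (F n) 𝒰) π)) /
      ENNReal.ofReal (((F n).card : ℝ) ^ α)

/-- The relative upper entropy dimension `D̄(G, 𝒰 | π)` of a cover. -/
noncomputable def DU {G X Y : Type*} [Group G] [MulAction G X]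
    (F : ℕ → Finset G) (𝒰 : Set (Set X)) (π : X → Y) : ℝ :=
  sInf {α : ℝ | 0 ≤ α ∧ hRelU F 𝒰 π α = 0}

/-- The relative lower entropy dimension `D̲(G, 𝒰 | π)` of a cover. -/
noncomputable def DL {G X Y : Type*} [Group G] [MulAction G X]
    (F : ℕ → Finset G) (𝒰 : Set (Set X)) (π : X → Y) : ℝ :=
  sInf {α : ℝ | 0 ≤ α ∧ hRelL F 𝒰 π α = 0}

/-- The relative upper entropy dimension `D̄(X, G | π)` of the system. -/
noncomputable def DUSys {G X Y : Type*} [Group G] [TopologicalSpace X] [MulAction G X]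
    (F : ℕ → Finset G) (π : X → Y) : ℝ :=
  sSup {d : ℝ | ∃ 𝒰 : Set (Set X), IsOpenCover 𝒰 ∧ d = DU F 𝒰 π}

/-- The relative lower entropy dimension `D̲(X, G | π)` of the system. -/
noncomputable def DLSys {G X Y : Type*} [Group G] [TopologicalSpace X] [MulAction G X]
    (F : ℕ → Finset G) (π : X → Y) : ℝ :=
  sSup {d : ℝ | ∃ 𝒰 : Set (Set X), IsOpenCover 𝒰 ∧ d = DL F 𝒰 π}

/-- `(1 / |F n ∩ S|) log N(⋁_{g ∈ F n ∩ S} g⁻¹ 𝒰 | π)`. -/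
noncomputable def entAlong {G X Y : Type*} [Group G] [MulAction G X]
    (F : ℕ → Finset G) (S : Set G) (𝒰 : Set (Set X)) (π : X → Y) : ℕ → ℝ≥0∞ :=
  fun n =>
    ENNReal.ofReal (Real.log (NRel (dynJoin (interF (F n) S) 𝒰) π)) /
      ((interF (F n) S).card : ℝ≥0∞)

/-- `S` is a relative entropy generating set of `𝒰` relative to `π`. -/
def IsEntGen {G X Y : Type*} [Group G] [MulAction G X]
    (F : ℕ → Finset G) (S : Set G) (𝒰 : Set (Set X)) (π : X → Y) : Prop :=
  InI F S ∧ 0 < atTop.liminf (entAlong F S 𝒰 π)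

/-- `S ∈ 𝒫(G, 𝒰 | π)` : positive relative upper entropy along `S`. -/
def InP {G X Y : Type*} [Group G] [MulAction G X]
    (F : ℕ → Finset G) (S : Set G) (𝒰 : Set (Set X)) (π : X → Y) : Prop :=
  InI F S ∧ 0 < atTop.limsup (entAlong F S 𝒰 π)

/-- `D̄_e(G, 𝒰 | π)`. -/
noncomputable def DeU {G X Y : Type*} [Group G] [MulAction G X]
    (F : ℕ → Finset G) (𝒰 : Set (Set X)) (π : X → Y) : ℝ :=
  sSup {d : ℝ | ∃ S : Set G, IsEntGen F S 𝒰 π ∧ d = upperDim F S}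

/-- `D̲_e(G, 𝒰 | π)`. -/
noncomputable def DeL {G X Y : Type*} [Group G] [MulAction G X]
    (F : ℕ → Finset G) (𝒰 : Set (Set X)) (π : X → Y) : ℝ :=
  sSup {d : ℝ | ∃ S : Set G, IsEntGen F S 𝒰 π ∧ d = lowerDim F S}

/-- `D̄_p(G, 𝒰 | π)`. -/
noncomputable def DpU {G X Y : Type*} [Group G] [MulAction G X]
    (F : ℕ → Finset G) (𝒰 : Set (Set X)) (π : X → Y) : ℝ :=
  sSup {d : ℝ | ∃ S : Set G, InP F S 𝒰 π ∧ d = upperDim F S}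

/-- `D̲_p(G, 𝒰 | π)`. -/
noncomputable def DpL {G X Y : Type*} [Group G] [MulAction G X]
    (F : ℕ → Finset G) (𝒰 : Set (Set X)) (π : X → Y) : ℝ :=
  sSup {d : ℝ | ∃ S : Set G, InP F S 𝒰 π ∧ d = lowerDim F S}

/-- `D̄_e(X, G | π)`. -/
noncomputable def DeUSys {G X Y : Type*} [Group G] [TopologicalSpace X] [MulAction G X]
    (F : ℕ → Finset G) (π : X → Y) : ℝ :=
  sSup {d : ℝ | ∃ 𝒰 : Set (Set X), IsOpenCover 𝒰 ∧ d = DeU F 𝒰 π}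

/-- `D̲_p(X, G | π)`. -/
noncomputable def DpLSys {G X Y : Type*} [Group G] [TopologicalSpace X] [MulAction G X]
    (F : ℕ → Finset G) (π : X → Y) : ℝ :=
  sSup {d : ℝ | ∃ 𝒰 : Set (Set X), IsOpenCover 𝒰 ∧ d = DpL F 𝒰 π}

/-- The cover `{X ∖ cl B(x i, 1/k) : i}` associated with a tuple. -/
def ballCover {X : Type*} [MetricSpace X] {n : ℕ} (x : Fin n → X) (k : ℕ) : Set (Set X) :=
  {V | ∃ i : Fin n, V = (Metric.closedBall (x i) (1 / (k : ℝ)))ᶜ}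

/-- The relative entropy dimension `D̄(x₁, …, x_n | π)` of a tuple. -/
noncomputable def tupleDim {G X Y : Type*} [Group G] [MetricSpace X] [MulAction G X] {n : ℕ}
    (F : ℕ → Finset G) (x : Fin n → X) (π : X → Y) : ℝ :=
  limUnder atTop fun k : ℕ => DU F (ballCover x k) π

/-- The tuple lies on the diagonal. -/
def IsDiag {X : Type*} {n : ℕ} (x : Fin n → X) : Prop := ∀ i j, x i = x j

/-- The `n`-th relative dimension set `𝒟_n(X, G | π)`. -/
noncomputable def dimSet {G X Z : Type*} [Group G] [MetricSpace X] [MulAction G X]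
    (F : ℕ → Finset G) (π : X → Z) (n : ℕ) : Set ℝ :=
  {α : ℝ | 0 ≤ α ∧ ∃ x : Fin n → X, ¬ IsDiag x ∧ tupleDim F x π = α}

/-- The translated cover `g𝒰`. -/
def smulCover {G X : Type*} [SMul G X] (g : G) (𝒰 : Set (Set X)) : Set (Set X) :=
  (fun U => (fun x => g • x) '' U) '' 𝒰

/-- The join `𝒰 ∨ 𝒱` of two covers. -/
def covJoin {X : Type*} (𝒰 𝒱 : Set (Set X)) : Set (Set X) :=
  {W | ∃ U ∈ 𝒰, ∃ V ∈ 𝒱, W = U ∩ V}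

/-- A standard cover: two non-dense open sets covering `X`. -/
def IsStandardCover {X : Type*} [TopologicalSpace X] (𝒲 : Set (Set X)) : Prop :=
  ∃ U V : Set X, 𝒲 = {U, V} ∧ IsOpen U ∧ IsOpen V ∧ U ∪ V = Set.univ ∧
    ¬ Dense U ∧ ¬ Dense V


section Aux
open Filter Topology
open scoped ENNReal

lemma log_nat_mono {a b : ℕ} (h : a ≤ b) : Real.log a ≤ Real.log b := by
  rcases Nat.eq_zero_or_pos a with ha | ha
  · subst ha
    simp only [Nat.cast_zero, Real.log_zero]
    rcases Nat.eq_zero_or_pos b with hb | hb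
    · simp [hb]
    · exact Real.log_nonneg (by exact_mod_cast hb)
  · exact Real.log_le_log (by exact_mod_cast ha) (by exact_mod_cast h)

lemma coverNum_mono {X : Type*} {𝒰 𝒱 : Set (Set X)} (φ : Set X → Set X)
    (hφ : ∀ U ∈ 𝒰, φ U ∈ 𝒱 ∧ U ⊆ φ U) (E : Set X)
    (hne : ∃ t : Finset (Set X), ↑t ⊆ 𝒰 ∧ E ⊆ ⋃₀ (t : Set (Set X))) :
    coverNum 𝒱 E ≤ coverNum 𝒰 E := by
  classical
  have hSne : {k | ∃ t : Finset (Set X), ↑t ⊆ 𝒰 ∧ t.card = k ∧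
      E ⊆ ⋃₀ (t : Set (Set X))}.Nonempty := by
    obtain ⟨t, ht1, ht2⟩ := hne
    exact ⟨t.card, t, ht1, rfl, ht2⟩
  obtain ⟨t, ht𝒰, htc, htE⟩ := Nat.sInf_mem hSne
  have h1 : coverNum 𝒱 E ≤ (t.image φ).card := by
    apply Nat.sInf_le
    refine ⟨t.image φ, ?_, rfl, ?_⟩
    · intro V hV
      simp only [Finset.coe_image, Set.mem_image, Finset.mem_coe] at hV
      obtain ⟨U, hU, rfl⟩ := hV
      exact (hφ U (ht𝒰 hU)).1
    · intro w hw
      obtain ⟨U, hU, hwU⟩ := htE hw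
      refine ⟨φ U, ?_, (hφ U (ht𝒰 hU)).2 hwU⟩
      simp only [Finset.coe_image, Set.mem_image, Finset.mem_coe]
      exact ⟨U, hU, rfl⟩
  calc coverNum 𝒱 E ≤ (t.image φ).card := h1
    _ ≤ t.card := Finset.card_image_le
    _ = coverNum 𝒰 E := htc

lemma dynJoin_matching {G X : Type*} [Group G] [MulAction G X]
    {𝒰 𝒱 : Set (Set X)} (φ : Set X → Set X)
    (hφ : ∀ U ∈ 𝒰, φ U ∈ 𝒱 ∧ U ⊆ φ U) (B : Finset G) :
    ∃ Φ : Set X → Set X, ∀ W ∈ dynJoin B 𝒰, Φ W ∈ dynJoin B 𝒱 ∧ W ⊆ Φ W := by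
  classical
  refine ⟨fun W => if h : W ∈ dynJoin B 𝒰 then
    ⋂ g ∈ B, (fun x => g • x) ⁻¹' (φ (h.choose g)) else W, ?_⟩
  intro W hW
  simp only [dif_pos hW]
  obtain ⟨hf1, hf2⟩ := hW.choose_spec
  constructor
  · exact ⟨fun g => φ (hW.choose g), fun g hg => (hφ _ (hf1 g hg)).1, rfl⟩
  · intro w hw
    rw [hf2] at hw
    simp only [Set.mem_iInter] at hw ⊢
    intro g hg
    exact (hφ _ (hf1 g hg)).2 (hw g hg)

lemma dynJoin_finite_subcover {G X : Type*} [Group G] [MulAction G X]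
    {𝒰 : Set (Set X)} (h𝒰cov : ⋃₀ 𝒰 = Set.univ) (h𝒰fin : 𝒰.Finite) (B : Finset G) :
    ∃ t : Finset (Set X), ↑t ⊆ dynJoin B 𝒰 ∧ (Set.univ : Set X) ⊆ ⋃₀ (t : Set (Set X)) ∧
      t.card ≤ h𝒰fin.toFinset.card ^ B.card := by
  classical
  set 𝒰f := h𝒰fin.toFinset with h𝒰f
  refine ⟨(B.pi fun _ => 𝒰f).image
      (fun f => ⋂ g ∈ B, (fun x => g • x) ⁻¹' (if h : g ∈ B then f g h else ∅)), ?_, ?_, ?_⟩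
  · intro W hW
    simp only [Finset.coe_image, Set.mem_image, Finset.mem_coe, Finset.mem_pi] at hW
    obtain ⟨f, hf, rfl⟩ := hW
    refine ⟨fun g => if h : g ∈ B then f g h else ∅, fun g hg => ?_, rfl⟩
    simp only [dif_pos hg]
    have := hf g hg
    rwa [Set.Finite.mem_toFinset] at this
  · intro p _
    have hex : ∀ g : G, ∃ U, U ∈ 𝒰 ∧ g • p ∈ U := by
      intro g
      have : g • p ∈ ⋃₀ 𝒰 := by rw [h𝒰cov]; trivial
      obtain ⟨U, hU, hpU⟩ := this
      exact ⟨U, hU, hpU⟩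
    choose u hu1 hu2 using hex
    refine ⟨⋂ g ∈ B, (fun x => g • x) ⁻¹' (if h : g ∈ B then u g else ∅), ?_, ?_⟩
    · simp only [Finset.coe_image, Set.mem_image, Finset.mem_coe, Finset.mem_pi]
      exact ⟨fun g _ => u g, fun g hg => (Set.Finite.mem_toFinset _).2 (hu1 g), rfl⟩
    · simp only [Set.mem_iInter]
      intro g hg
      simp only [dif_pos hg]
      exact hu2 g
  · calc ((B.pi fun _ => 𝒰f).image _).card ≤ (B.pi fun _ => 𝒰f).card :=
        Finset.card_image_le
      _ = ∏ _g ∈ B, 𝒰f.card := Finset.card_pi _ _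
      _ = 𝒰f.card ^ B.card := Finset.prod_const _

lemma coverNum_le_of_cover {X : Type*} {𝒲 : Set (Set X)} {t : Finset (Set X)}
    (hsub : ↑t ⊆ 𝒲) (hcov : (Set.univ : Set X) ⊆ ⋃₀ (t : Set (Set X))) (E : Set X) :
    coverNum 𝒲 E ≤ t.card :=
  Nat.sInf_le ⟨t, hsub, rfl, (Set.subset_univ E).trans hcov⟩

lemma NRel_le_of_cover {X Y : Type*} {𝒲 : Set (Set X)} {t : Finset (Set X)}
    (hsub : ↑t ⊆ 𝒲) (hcov : (Set.univ : Set X) ⊆ ⋃₀ (t : Set (Set X))) (π : X → Y) :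
    NRel 𝒲 π ≤ t.card :=
  ciSup_le' fun _ => coverNum_le_of_cover hsub hcov _

lemma NRel_mono_of_matching {X Y : Type*} {𝒰' 𝒱' : Set (Set X)} (Φ : Set X → Set X)
    (hΦ : ∀ W ∈ 𝒰', Φ W ∈ 𝒱' ∧ W ⊆ Φ W) {t : Finset (Set X)}
    (hsub : ↑t ⊆ 𝒰') (hcov : (Set.univ : Set X) ⊆ ⋃₀ (t : Set (Set X))) (π : X → Y) :
    NRel 𝒱' π ≤ NRel 𝒰' π := by
  have hbdd : BddAbove (Set.range fun y : Y => coverNum 𝒰' (π ⁻¹' {y})) := by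
    refine ⟨t.card, ?_⟩
    rintro _ ⟨y, rfl⟩
    exact coverNum_le_of_cover hsub hcov _
  refine ciSup_le' fun y => ?_
  have h1 : coverNum 𝒱' (π ⁻¹' {y}) ≤ coverNum 𝒰' (π ⁻¹' {y}) :=
    coverNum_mono Φ hΦ _ ⟨t, hsub, (Set.subset_univ _).trans hcov⟩
  exact h1.trans (le_ciSup hbdd y)

lemma DU_nonneg {G X Y : Type*} [Group G] [MulAction G X]
    (F : ℕ → Finset G) (𝒰 : Set (Set X)) (π : X → Y) :
    0 ≤ DU F 𝒰 π := Real.sInf_nonneg fun x hx => hx.1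

end Aux
section Aux2
open Filter Topology
open scoped ENNReal

lemma DU_mono {G X Y : Type*} [Group G] [MulAction G X]
    (F : ℕ → Finset G) (hFne : ∀ n, (F n).Nonempty)
    (hcard : Tendsto (fun n => (F n).card) atTop atTop)
    {𝒰 𝒱 : Set (Set X)} (π : X → Y)
    (h𝒰cov : ⋃₀ 𝒰 = Set.univ) (h𝒰fin : 𝒰.Finite)
    (φ : Set X → Set X) (hφ : ∀ U ∈ 𝒰, φ U ∈ 𝒱 ∧ U ⊆ φ U) :
    DU F 𝒱 π ≤ DU F 𝒰 π := by
  classical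
  set M := h𝒰fin.toFinset.card with hM
  have hNRel : ∀ B : Finset G, NRel (dynJoin B 𝒱) π ≤ NRel (dynJoin B 𝒰) π ∧
      NRel (dynJoin B 𝒰) π ≤ M ^ B.card := by
    intro B
    obtain ⟨t, hsub, hcov, hcard'⟩ := dynJoin_finite_subcover h𝒰cov h𝒰fin B
    obtain ⟨Φ, hΦ⟩ := dynJoin_matching φ hφ B
    exact ⟨NRel_mono_of_matching Φ hΦ hsub hcov π,
      (NRel_le_of_cover hsub hcov π).trans hcard'⟩
  have hkey : ∀ α : ℝ, hRelU F 𝒱 π α ≤ hRelU F 𝒰 π α := by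
    intro α
    exact Filter.limsup_le_limsup (Filter.Eventually.of_forall fun m =>
      ENNReal.div_le_div_right (ENNReal.ofReal_le_ofReal (log_nat_mono (hNRel (F m)).1)) _)
  have htwo : hRelU F 𝒰 π 2 = 0 := by
    have hb : ∀ m, ENNReal.ofReal (Real.log (NRel (dynJoin (F m) 𝒰) π)) /
        ENNReal.ofReal (((F m).card : ℝ) ^ (2:ℝ)) ≤
        ENNReal.ofReal (Real.log M / ((F m).card : ℝ)) := by
      intro m
      have hc : (0:ℝ) < ((F m).card : ℝ) := by exact_mod_cast (hFne m).card_pos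
      have h1 : Real.log (NRel (dynJoin (F m) 𝒰) π) ≤ ((F m).card : ℝ) * Real.log M := by
        have := log_nat_mono (hNRel (F m)).2
        rwa [Nat.cast_pow, Real.log_pow] at this
      have hpos : (0:ℝ) < ((F m).card : ℝ) ^ (2:ℝ) := by positivity
      rw [← ENNReal.ofReal_div_of_pos hpos]
      apply ENNReal.ofReal_le_ofReal
      have h2 : (((F m).card : ℝ) * Real.log M) / (((F m).card : ℝ) ^ (2:ℝ)) =
          Real.log M / ((F m).card : ℝ) := by
        rw [show ((F m).card : ℝ) ^ (2:ℝ) = ((F m).card : ℝ) * ((F m).card : ℝ) by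
          rw [Real.rpow_two]; ring]
        rw [mul_div_mul_left _ _ (ne_of_gt hc)]
      calc Real.log (NRel (dynJoin (F m) 𝒰) π) / (((F m).card : ℝ) ^ (2:ℝ)) ≤
            (((F m).card : ℝ) * Real.log M) / (((F m).card : ℝ) ^ (2:ℝ)) := by
              gcongr
        _ = Real.log M / ((F m).card : ℝ) := h2
    have hb0 : Tendsto (fun m => ENNReal.ofReal (Real.log M / ((F m).card : ℝ)))
        atTop (𝓝 0) := by
      rw [← ENNReal.ofReal_zero]
      apply ENNReal.tendsto_ofReal
      exact Tendsto.div_atTop tendsto_const_nhds (tendsto_natCast_atTop_atTop.comp hcard)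
    have hle : hRelU F 𝒰 π 2 ≤ 0 := by
      calc hRelU F 𝒰 π 2 ≤
          Filter.limsup (fun m => ENNReal.ofReal (Real.log M / ((F m).card : ℝ))) atTop :=
            Filter.limsup_le_limsup (Filter.Eventually.of_forall hb)
              (by isBoundedDefault) (by isBoundedDefault)
        _ = 0 := hb0.limsup_eq
    exact le_antisymm hle zero_le
  have hsub : {α : ℝ | 0 ≤ α ∧ hRelU F 𝒰 π α = 0} ⊆ {α : ℝ | 0 ≤ α ∧ hRelU F 𝒱 π α = 0} := by
    rintro α ⟨hα0, h0⟩
    exact ⟨hα0, le_antisymm (h0 ▸ hkey α) zero_le⟩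
  exact csInf_le_csInf ⟨0, fun x hx => hx.1⟩ ⟨2, by norm_num, htwo⟩ hsub

end Aux2
section Aux3
open Filter Topology
open scoped ENNReal

/-- The tuple's closed balls of radius `1/k` have empty intersection. -/
def GoodT {X : Type*} [MetricSpace X] {n : ℕ} (z : Fin n → X) (k : ℕ) : Prop :=
  ⋂ i, Metric.closedBall (z i) (1 / (k : ℝ)) = ∅

lemma GoodT.mono {X : Type*} [MetricSpace X] {n : ℕ} {z : Fin n → X} {k m : ℕ}
    (hg : GoodT z k) (hk1 : 1 ≤ k) (hkm : k ≤ m) : GoodT z m := by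
  have hkpos : (0:ℝ) < (k:ℝ) := by exact_mod_cast hk1
  have hdiv : (1:ℝ)/(m:ℝ) ≤ 1/(k:ℝ) := by
    apply one_div_le_one_div_of_le hkpos
    exact_mod_cast hkm
  unfold GoodT at hg ⊢
  rw [← Set.subset_empty_iff, ← hg]
  exact Set.iInter_mono fun i => Metric.closedBall_subset_closedBall hdiv

lemma ballCover_sUnion {X : Type*} [MetricSpace X] {n : ℕ} (z : Fin n → X) (k : ℕ)
    (h : GoodT z k) : ⋃₀ ballCover z k = Set.univ := by
  ext w
  simp only [Set.mem_univ, iff_true]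
  by_contra hc
  have hmem : w ∈ ⋂ i, Metric.closedBall (z i) (1/(k:ℝ)) := by
    simp only [Set.mem_iInter]
    intro i
    by_contra hwi
    exact hc ⟨(Metric.closedBall (z i) (1/(k:ℝ)))ᶜ, ⟨i, rfl⟩, hwi⟩
  rw [h] at hmem
  exact hmem

lemma ballCover_finite {X : Type*} [MetricSpace X] {n : ℕ} (z : Fin n → X) (k : ℕ) :
    (ballCover z k).Finite := by
  have : ballCover z k = Set.range fun i : Fin n => (Metric.closedBall (z i) (1/(k:ℝ)))ᶜ :=
    Set.ext fun V => ⟨fun ⟨i, h⟩ => ⟨i, h.symm⟩, fun ⟨i, h⟩ => ⟨i, h.symm⟩⟩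
  rw [this]
  exact Set.finite_range _

lemma ballCover_matching {X : Type*} [MetricSpace X] {n : ℕ} {z w : Fin n → X} {k m : ℕ}
    (h : ∀ i, Metric.closedBall (w i) (1/(m:ℝ)) ⊆ Metric.closedBall (z i) (1/(k:ℝ))) :
    ∃ φ : Set X → Set X, ∀ U ∈ ballCover z k, φ U ∈ ballCover w m ∧ U ⊆ φ U := by
  classical
  refine ⟨fun U => if hU : U ∈ ballCover z k then
    (Metric.closedBall (w hU.choose) (1/(m:ℝ)))ᶜ else U, ?_⟩
  intro U hU
  simp only [dif_pos hU]
  refine ⟨⟨hU.choose, rfl⟩, ?_⟩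
  have hspec : U = (Metric.closedBall (z hU.choose) (1/(k:ℝ)))ᶜ := hU.choose_spec
  intro p hp
  rw [hspec] at hp
  exact fun hball => hp (h hU.choose hball)

lemma DU_ballCover_antitone {G X Y : Type*} [Group G] [MulAction G X] [MetricSpace X] {n : ℕ}
    (F : ℕ → Finset G) (hFne : ∀ m, (F m).Nonempty)
    (hcard : Tendsto (fun m => (F m).card) atTop atTop) (π : X → Y)
    (z : Fin n → X) {k m : ℕ} (hk1 : 1 ≤ k) (hkm : k ≤ m) (hg : GoodT z k) :
    DU F (ballCover z m) π ≤ DU F (ballCover z k) π := by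
  have hkpos : (0:ℝ) < (k:ℝ) := by exact_mod_cast hk1
  have hdiv : (1:ℝ)/(m:ℝ) ≤ 1/(k:ℝ) := by
    apply one_div_le_one_div_of_le hkpos
    exact_mod_cast hkm
  obtain ⟨φ, hφ⟩ := ballCover_matching (z := z) (w := z) (k := k) (m := m)
    (fun i => Metric.closedBall_subset_closedBall hdiv)
  exact DU_mono F hFne hcard π (ballCover_sUnion z k hg) (ballCover_finite z k) φ hφ

lemma tupleDim_eq_iInf {G X Y : Type*} [Group G] [MulAction G X] [MetricSpace X] {n : ℕ}
    (F : ℕ → Finset G) (hFne : ∀ m, (F m).Nonempty)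
    (hcard : Tendsto (fun m => (F m).card) atTop atTop) (π : X → Y)
    (z : Fin n → X) {k₀ : ℕ} (hk1 : 1 ≤ k₀) (hg : GoodT z k₀) :
    tupleDim F z π = ⨅ m : ℕ, DU F (ballCover z (m + k₀)) π := by
  set u : ℕ → ℝ := fun m => DU F (ballCover z (m + k₀)) π with hu
  have hanti : Antitone u := by
    intro a b hab
    exact DU_ballCover_antitone F hFne hcard π z (hk1.trans (Nat.le_add_left k₀ a))
      (Nat.add_le_add_right hab k₀) (hg.mono hk1 (Nat.le_add_left k₀ a))
  have hbdd : BddBelow (Set.range u) := by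
    refine ⟨0, ?_⟩
    rintro _ ⟨m, rfl⟩
    exact DU_nonneg F _ π
  have htend : Tendsto u atTop (𝓝 (⨅ m, u m)) := tendsto_atTop_ciInf hanti hbdd
  have htend2 : Tendsto (fun k => DU F (ballCover z k) π) atTop (𝓝 (⨅ m, u m)) :=
    (tendsto_add_atTop_iff_nat k₀).1 htend
  exact htend2.limUnder_eq

lemma DU_eq_zero_of_const {G X Y : Type*} [Group G] [MulAction G X]
    (F : ℕ → Finset G) {N : ℕ} (hconst : ∀ m, N ≤ m → F m = F N)
    (𝒰 : Set (Set X)) (π : X → Y) :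
    DU F 𝒰 π = 0 := by
  have hev : ∀ α : ℝ, hRelU F 𝒰 π α =
      ENNReal.ofReal (Real.log (NRel (dynJoin (F N) 𝒰) π)) /
        ENNReal.ofReal (((F N).card : ℝ) ^ α) := by
    intro α
    have h1 : ∀ᶠ m in atTop,
        (ENNReal.ofReal (Real.log (NRel (dynJoin (F m) 𝒰) π)) /
          ENNReal.ofReal (((F m).card : ℝ) ^ α)) =
        (ENNReal.ofReal (Real.log (NRel (dynJoin (F N) 𝒰) π)) /
          ENNReal.ofReal (((F N).card : ℝ) ^ α)) := by
      filter_upwards [Filter.eventually_ge_atTop N] with m hm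
      rw [hconst m hm]
    calc hRelU F 𝒰 π α = _ := Filter.limsup_congr h1
      _ = _ := Filter.limsup_const _
  unfold DU
  by_cases hc : ENNReal.ofReal (Real.log (NRel (dynJoin (F N) 𝒰) π)) = 0
  · have hset : {α : ℝ | 0 ≤ α ∧ hRelU F 𝒰 π α = 0} = Set.Ici 0 := by
      ext α
      simp only [Set.mem_setOf_eq, Set.mem_Ici, and_iff_left_iff_imp]
      intro _
      rw [hev α, hc, ENNReal.zero_div]
    rw [hset, csInf_Ici]
  · have hset : {α : ℝ | 0 ≤ α ∧ hRelU F 𝒰 π α = 0} = ∅ := by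
      ext α
      simp only [Set.mem_setOf_eq, Set.mem_empty_iff_false, iff_false, not_and]
      intro _ h0
      rw [hev α, ENNReal.div_eq_zero_iff] at h0
      rcases h0 with h0 | h0
      · exact hc h0
      · exact ENNReal.ofReal_ne_top h0
    rw [hset, Real.sInf_empty]

lemma isOpen_not_isDiag {X : Type*} [MetricSpace X] {n : ℕ} :
    IsOpen {x : Fin n → X | ¬ IsDiag x} := by
  have h : {x : Fin n → X | ¬ IsDiag x} = ⋃ i, ⋃ j, {x : Fin n → X | x i ≠ x j} := by
    ext x
    simp [IsDiag, not_forall]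
  rw [h]
  exact isOpen_iUnion fun i => isOpen_iUnion fun j =>
    isOpen_ne_fun (continuous_apply i) (continuous_apply j)

end Aux3

theorem stmt16 {G X Y : Type*} [Group G] [Countable G]
    [MetricSpace X] [CompactSpace X] [MetricSpace Y] [CompactSpace Y]
    [MulAction G X] [MulAction G Y]
    (hcX : ∀ g : G, Continuous fun x : X => g • x)
    (hcY : ∀ g : G, Continuous fun y : Y => g • y)
    (π : X → Y) (hπ : IsFactorMap G π)
    (F : ℕ → Finset G) (hF : IsFolnerSeq G F) (hFmono : ∀ n, F n ⊆ F (n + 1))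
    {n : ℕ} (hn : 2 ≤ n) (α : ℝ) (hα : 0 ≤ α) :
    IsClosed ({x : Fin n → X | ¬ IsDiag x ∧ α ≤ tupleDim F x π} ∪
      {x : Fin n → X | IsDiag x}) := by
  classical
  have hFne : ∀ m, (F m).Nonempty := hF.1
  set C := {x : Fin n → X | ¬ IsDiag x ∧ tupleDim F x π < α} with hCdef
  have hopen : IsOpen C := by
    by_cases hcard : Filter.Tendsto (fun m => (F m).card) Filter.atTop Filter.atTop
    · -- |F m| → ∞
      rw [isOpen_iff_mem_nhds]
      rintro x ⟨hxd, hxlt⟩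
      obtain ⟨i, j, hij⟩ : ∃ i j, x i ≠ x j := by
        by_contra h
        push_neg at h
        exact hxd h
      have hd : 0 < dist (x i) (x j) := dist_pos.2 hij
      obtain ⟨k', hk'⟩ := exists_nat_one_div_lt (half_pos hd)
      set k₀ := k' + 1 with hk₀def
      have hk₀1 : 1 ≤ k₀ := Nat.le_add_left 1 k'
      have hgood₀ : GoodT x k₀ := by
        rw [GoodT, Set.eq_empty_iff_forall_notMem]
        intro w hw
        simp only [Set.mem_iInter, Metric.mem_closedBall] at hw
        have h1 := hw i
        have h2 := hw j
        have h3 : dist (x i) (x j) ≤ dist (x i) w + dist w (x j) := dist_triangle _ _ _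
        have h4 : dist (x i) w = dist w (x i) := dist_comm _ _
        have hcast : ((k₀ : ℕ) : ℝ) = (k' : ℝ) + 1 := by rw [hk₀def]; push_cast; ring
        rw [hcast] at h1 h2
        linarith
      rw [tupleDim_eq_iInf F hFne hcard π x hk₀1 hgood₀] at hxlt
      obtain ⟨m, hm⟩ := exists_lt_of_ciInf_lt hxlt
      set k := m + k₀ with hkdef
      have hk1 : 1 ≤ k := hk₀1.trans (Nat.le_add_left k₀ m)
      have hkpos : (0:ℝ) < (k:ℝ) := by exact_mod_cast hk1
      have hgoodk : GoodT x k := hgood₀.mono hk₀1 (Nat.le_add_left k₀ m)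
      set δ := 1/(k:ℝ) - 1/((k:ℝ)+1) with hδdef
      have hδ : 0 < δ := by
        have h5 : 1/((k:ℝ)+1) < 1/(k:ℝ) := one_div_lt_one_div_of_lt hkpos (lt_add_one _)
        rw [hδdef]; linarith
      have hsm : DU F (ballCover x k) π < α := hm
      have hnb1 : {x' : Fin n → X | ∀ i, dist (x' i) (x i) < δ} ∈ 𝓝 x := by
        have hopen1 : IsOpen {x' : Fin n → X | ∀ i, dist (x' i) (x i) < δ} := by
          have heq : {x' : Fin n → X | ∀ i, dist (x' i) (x i) < δ} =
              ⋂ i, (fun x' : Fin n → X => x' i) ⁻¹' Metric.ball (x i) δ := by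
            ext x'
            simp [Metric.mem_ball]
          rw [heq]
          exact isOpen_iInter_of_finite fun i =>
            (Metric.isOpen_ball).preimage (continuous_apply i)
        refine hopen1.mem_nhds ?_
        intro i
        simpa using hδ
      have hnb2 : {x' : Fin n → X | ¬ IsDiag x'} ∈ 𝓝 x :=
        isOpen_not_isDiag.mem_nhds hxd
      refine Filter.mem_of_superset (Filter.inter_mem hnb1 hnb2) ?_
      rintro x' ⟨hdist, hx'd⟩
      refine ⟨hx'd, ?_⟩
      have hsubball : ∀ i, Metric.closedBall (x' i) (1/((k+1 : ℕ):ℝ)) ⊆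
          Metric.closedBall (x i) (1/(k:ℝ)) := by
        intro i w hw
        rw [Metric.mem_closedBall] at hw ⊢
        have hc1 : ((k+1 : ℕ):ℝ) = (k:ℝ) + 1 := by push_cast; ring
        rw [hc1] at hw
        have htri := dist_triangle w (x' i) (x i)
        have h5 : dist (x' i) (x i) < δ := hdist i
        rw [hδdef] at h5
        linarith
      obtain ⟨φ, hφ⟩ := ballCover_matching hsubball
      have hle : DU F (ballCover x' (k+1)) π ≤ DU F (ballCover x k) π :=
        DU_mono F hFne hcard π (ballCover_sUnion x k hgoodk) (ballCover_finite x k) φ hφ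
      have hgood' : GoodT x' (k+1) := by
        rw [GoodT, Set.eq_empty_iff_forall_notMem]
        intro w hw
        simp only [Set.mem_iInter] at hw
        have hmem : w ∈ ⋂ i, Metric.closedBall (x i) (1/(k:ℝ)) :=
          Set.mem_iInter.2 fun i => hsubball i (hw i)
        rw [hgoodk] at hmem
        exact hmem
      have hk11 : 1 ≤ k + 1 := Nat.le_add_left 1 k
      rw [tupleDim_eq_iInf F hFne hcard π x' hk11 hgood']
      have hbdd' : BddBelow (Set.range fun m' => DU F (ballCover x' (m' + (k+1))) π) := by
        refine ⟨0, ?_⟩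
        rintro _ ⟨m', rfl⟩
        exact DU_nonneg F _ π
      calc ⨅ m', DU F (ballCover x' (m' + (k+1))) π
          ≤ DU F (ballCover x' (0 + (k+1))) π := ciInf_le hbdd' 0
        _ = DU F (ballCover x' (k+1)) π := by rw [zero_add]
        _ ≤ DU F (ballCover x k) π := hle
        _ < α := hsm
    · -- |F m| bounded
      have hmonoF : Monotone F := monotone_nat_of_le_succ hFmono
      have hmono : Monotone fun m => (F m).card := fun a b hab => Finset.card_le_card (hmonoF hab)
      have hbd : ∃ b, ∀ a, (F a).card < b := by
        by_contra h
        push_neg at h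
        exact hcard (tendsto_atTop_atTop_of_monotone hmono fun b => h b)
      obtain ⟨b, hb⟩ := hbd
      have hbdd : BddAbove (Set.range fun m => (F m).card) := by
        refine ⟨b, ?_⟩
        rintro _ ⟨m, rfl⟩
        exact (hb m).le
      have hne : (Set.range fun m => (F m).card).Nonempty := ⟨(F 0).card, 0, rfl⟩
      obtain ⟨N, hN⟩ := Nat.sSup_mem hne hbdd
      have hconst : ∀ m, N ≤ m → F m = F N := by
        intro m hm
        refine (Finset.eq_of_subset_of_card_le (hmonoF hm) ?_).symm
        calc (F m).card ≤ sSup (Set.range fun m => (F m).card) := le_csSup hbdd ⟨m, rfl⟩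
          _ = (F N).card := hN.symm
      have ht0 : ∀ z : Fin n → X, tupleDim F z π = 0 := by
        intro z
        unfold tupleDim
        have heq : (fun k : ℕ => DU F (ballCover z k) π) = fun _ => (0:ℝ) := by
          funext k
          exact DU_eq_zero_of_const F hconst _ π
        rw [heq]
        exact Filter.Tendsto.limUnder_eq tendsto_const_nhds
      by_cases hα0 : α ≤ 0
      · have hCe : C = ∅ := by
          ext x'
          simp only [hCdef, Set.mem_setOf_eq, Set.mem_empty_iff_false, iff_false, not_and]
          intro _
          rw [ht0 x']
          exact not_lt.2 hα0
        rw [hCe]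
        exact isOpen_empty
      · have hCe : C = {x' : Fin n → X | ¬ IsDiag x'} := by
          ext x'
          simp only [hCdef, Set.mem_setOf_eq, and_iff_left_iff_imp]
          intro _
          rw [ht0 x']
          exact lt_of_not_ge hα0
        rw [hCe]
        exact isOpen_not_isDiag
  have hcompl : ({x : Fin n → X | ¬ IsDiag x ∧ α ≤ tupleDim F x π} ∪
      {x : Fin n → X | IsDiag x}) = Cᶜ := by
    ext x
    by_cases h : IsDiag x <;> simp [hCdef, h, not_lt]
  rw [hcompl]
  exact hopen.isClosed_compl
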